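/- The function R(u,v) = (1/2)(u^{2H} + v^{2H} − |v−u|^{2H}) is positive semidefinite on ℝ₊ × ℝ₊, for every H ∈ (0,1); i.e., it is a valid covariance function. -/

import Mathlib

open MeasureTheory Filter Set ProbabilityTheory

noncomputable section

/-- The covariance function of fractional Brownian motion of Hurst index `H`. -/
def fbmCov (H u v : ℝ) : ℝ := (u ^ (2*H) + v ^ (2*H) - |v - u| ^ (2*H)) / 2

/-- `B` is a fractional Brownian motion of Hurst index `H` under `P`: a centered Gaussian
process with (a.s.) continuous paths on `[0,∞)` and covariance `fbmCov H`. -/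
def IsFBM {Ω : Type*} [MeasurableSpace Ω] (P : Measure Ω) (H : ℝ)
    (B : ℝ → Ω → ℝ) : Prop :=
  (∀ t : ℝ, Measurable (B t)) ∧
  (∀ᵐ ω ∂P, ContinuousOn (fun t => B t ω) (Ici 0)) ∧
  ∀ (m : ℕ) (t : Fin m → ℝ), (∀ i, 0 ≤ t i) → ∀ (c : Fin m → ℝ),
    P.map (fun ω => ∑ i, c i * B (t i) ω) =
      gaussianReal 0 (∑ i, ∑ j, c i * c j * fbmCov H (t i) (t j)).toNNReal



namespace FbmAux
open Real

/-- The integrand in the integral representation of `t ^ α`. -/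
def K (α t x : ℝ) : ℝ := (1 - Real.cos (t * x)) * x ^ (-1 - α)

lemma one_sub_cos_nonneg (u : ℝ) : 0 ≤ 1 - Real.cos u := by
  have := Real.cos_le_one u; linarith

lemma one_sub_cos_le_sq (u : ℝ) : 1 - Real.cos u ≤ u ^ 2 / 2 := by
  have h2 : Real.cos u = Real.cos (u / 2) ^ 2 - Real.sin (u / 2) ^ 2 := by
    rw [← Real.cos_two_mul', show 2 * (u / 2) = u by ring]
  have h3 := Real.sin_sq_add_cos_sq (u / 2)
  have h4 : Real.sin (u / 2) ^ 2 ≤ (u / 2) ^ 2 := by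
    have := Real.abs_sin_le_abs (x := u / 2)
    nlinarith [abs_nonneg (Real.sin (u/2)), abs_nonneg (u/2), sq_abs (Real.sin (u/2)), sq_abs (u/2)]
  nlinarith

lemma K_nonneg {α t : ℝ} {x : ℝ} (hx : 0 ≤ x) : 0 ≤ K α t x :=
  mul_nonneg (one_sub_cos_nonneg _) (Real.rpow_nonneg hx _)

lemma K_aesm (α t : ℝ) : AEStronglyMeasurable (K α t) (volume.restrict (Ioi (0:ℝ))) := by
  have hc : ContinuousOn (K α t) (Ioi 0) := by
    apply ContinuousOn.mul
    · exact (continuous_const.sub (Real.continuous_cos.comp (continuous_const.mul continuous_id))).continuousOn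
    · intro x hx
      exact (Real.continuousAt_rpow_const x _ (Or.inl (ne_of_gt hx))).continuousWithinAt
  exact hc.aestronglyMeasurable measurableSet_Ioi

lemma K_integrable {α : ℝ} (hα0 : 0 < α) (hα2 : α < 2) (t : ℝ) :
    IntegrableOn (K α t) (Ioi 0) := by
  have hsplit : Ioi (0:ℝ) = Ioc 0 1 ∪ Ioi 1 := (Ioc_union_Ioi_eq_Ioi zero_le_one).symm
  rw [hsplit]
  apply IntegrableOn.union
  · -- on (0,1]: dominated by (t^2/2) * x^(1-α)
    have hint : IntegrableOn (fun x : ℝ => t ^ 2 / 2 * x ^ (1 - α)) (Ioc 0 1) := by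
      have h := intervalIntegral.intervalIntegrable_rpow' (a := (0:ℝ)) (b := 1) (r := 1 - α)
        (by linarith)
      rw [intervalIntegrable_iff, uIoc_of_le zero_le_one] at h
      exact h.const_mul _
    refine hint.mono' ((K_aesm α t).mono_set Ioc_subset_Ioi_self) ?_
    filter_upwards [ae_restrict_mem measurableSet_Ioc] with x hx
    obtain ⟨hx0, hx1⟩ := hx
    rw [Real.norm_eq_abs, abs_of_nonneg (K_nonneg hx0.le)]
    have h1 : 1 - Real.cos (t * x) ≤ t ^ 2 / 2 * x ^ (2:ℝ) := by
      have := one_sub_cos_le_sq (t * x)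
      rw [Real.rpow_two]
      nlinarith
    calc K α t x ≤ (t ^ 2 / 2 * x ^ (2:ℝ)) * x ^ (-1 - α) :=
          mul_le_mul_of_nonneg_right h1 (Real.rpow_nonneg hx0.le _)
      _ = t ^ 2 / 2 * x ^ (1 - α) := by
          rw [mul_assoc, ← Real.rpow_add hx0]; ring_nf
  · -- on (1,∞): dominated by 2 * x^(-1-α)
    have hint : IntegrableOn (fun x : ℝ => 2 * x ^ (-1 - α)) (Ioi 1) :=
      (integrableOn_Ioi_rpow_of_lt (by linarith) one_pos).const_mul 2
    refine hint.mono' ((K_aesm α t).mono_set (Ioi_subset_Ioi zero_le_one)) ?_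
    filter_upwards [ae_restrict_mem measurableSet_Ioi] with x hx
    have hx0 : (0:ℝ) < x := lt_trans one_pos hx
    rw [Real.norm_eq_abs, abs_of_nonneg (K_nonneg hx0.le)]
    have h1 : 1 - Real.cos (t * x) ≤ 2 := by
      have := Real.neg_one_le_cos (t * x); linarith
    exact mul_le_mul_of_nonneg_right h1 (Real.rpow_nonneg hx0.le _)

lemma K_scaling {α : ℝ} {u : ℝ} (hu : 0 < u) :
    ∫ x in Ioi (0:ℝ), K α u x = u ^ α * ∫ x in Ioi (0:ℝ), K α 1 x := by
  have h := MeasureTheory.integral_comp_mul_left_Ioi (fun y => K α 1 y) 0 hu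
  rw [mul_zero] at h
  have h2 : ∀ x ∈ Ioi (0:ℝ), K α 1 (u * x) = u ^ (-1 - α) * K α u x := by
    intro x hx
    simp only [K, one_mul]
    rw [Real.mul_rpow hu.le (le_of_lt hx)]
    ring
  rw [setIntegral_congr_fun measurableSet_Ioi h2, MeasureTheory.integral_const_mul,
    smul_eq_mul] at h
  have hne : u ^ (-1 - α) ≠ 0 := (Real.rpow_pos_of_pos hu _).ne'
  have e : (u ^ (-1 - α))⁻¹ * u⁻¹ = u ^ α := by
    rw [show (-1 - α) = -(1 + α) by ring, Real.rpow_neg hu.le, inv_inv,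
      ← Real.rpow_neg_one u, ← Real.rpow_add hu]
    norm_num
  have : ∫ x in Ioi (0:ℝ), K α u x
      = (u ^ (-1 - α))⁻¹ * u⁻¹ * ∫ x in Ioi (0:ℝ), K α 1 x := by
    field_simp at h ⊢
    linarith [h]
  rw [this, e]

lemma F1_pos {α : ℝ} (hα0 : 0 < α) (hα2 : α < 2) :
    0 < ∫ x in Ioi (0:ℝ), K α 1 x := by
  have hI := K_integrable hα0 hα2 1
  have hsubset : Ioc (π / 2) π ⊆ Ioi (0:ℝ) := fun x hx => lt_trans (by positivity) hx.1
  have hmono : ∫ x in Ioc (π / 2) π, K α 1 x ≤ ∫ x in Ioi (0:ℝ), K α 1 x := by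
    refine setIntegral_mono_set hI ?_ (HasSubset.Subset.eventuallyLE hsubset)
    filter_upwards [ae_restrict_mem measurableSet_Ioi] with x hx
    exact K_nonneg (le_of_lt hx)
  refine lt_of_lt_of_le ?_ hmono
  have hlow : π ^ (-1 - α) * (volume (Ioc (π / 2) π)).toReal ≤ ∫ x in Ioc (π / 2) π, K α 1 x := by
    refine setIntegral_ge_of_const_le_real measurableSet_Ioc (by simp [Real.volume_Ioc]) ?_
      (hI.mono_set hsubset)
    intro x hx
    obtain ⟨hx1, hx2⟩ := hx
    have hx0 : (0:ℝ) < x := lt_trans (by positivity) hx1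
    have hcos : Real.cos x ≤ 0 :=
      Real.cos_nonpos_of_pi_div_two_le_of_le hx1.le (by linarith [Real.pi_pos])
    have hpow : π ^ (-1 - α) ≤ x ^ (-1 - α) :=
      Real.rpow_le_rpow_of_nonpos hx0 hx2 (by linarith)
    simp only [K, one_mul]
    calc π ^ (-1 - α) = 1 * π ^ (-1 - α) := (one_mul _).symm
      _ ≤ (1 - Real.cos x) * x ^ (-1 - α) := by
          apply mul_le_mul (by linarith) hpow (Real.rpow_nonneg Real.pi_pos.le _) (by linarith)
  refine lt_of_lt_of_le ?_ hlow
  rw [Real.volume_Ioc, ENNReal.toReal_ofReal (by linarith [Real.pi_pos])]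
  have := Real.pi_pos
  have h1 : (0:ℝ) < π ^ (-1 - α) := Real.rpow_pos_of_pos this _
  nlinarith

lemma K_int_eq {α : ℝ} (hα0 : 0 < α) (u : ℝ) (hu : 0 ≤ u) :
    ∫ x in Ioi (0:ℝ), K α u x = u ^ α * ∫ x in Ioi (0:ℝ), K α 1 x := by
  rcases eq_or_lt_of_le hu with h | h
  · have : K α u = fun _ => 0 := by
      funext x; simp [K, ← h]
    rw [this, ← h, Real.zero_rpow hα0.ne']
    simp
  · exact K_scaling h

lemma K_neg (α t : ℝ) : K α (-t) = K α t := by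
  funext x
  simp [K, neg_mul, Real.cos_neg]

end FbmAux


theorem fbmCov_posSemidef (H : ℝ) (hH : H ∈ Ioo (0:ℝ) 1)
    (m : ℕ) (t : Fin m → ℝ) (ht : ∀ i, 0 ≤ t i) (c : Fin m → ℝ) :
    0 ≤ ∑ i, ∑ j, c i * c j * fbmCov H (t i) (t j) := by
  obtain ⟨hH0, hH1⟩ := hH
  have hα0 : 0 < 2 * H := by linarith
  have hα2 : 2 * H < 2 := by linarith
  set α : ℝ := 2 * H with hα
  set F1 : ℝ := ∫ x in Ioi (0:ℝ), FbmAux.K α 1 x with hF1def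
  have hF1pos : 0 < F1 := FbmAux.F1_pos hα0 hα2
  have hKint : ∀ s : ℝ, IntegrableOn (FbmAux.K α s) (Ioi 0) := FbmAux.K_integrable hα0 hα2
  have hrep : ∀ u : ℝ, 0 ≤ u → u ^ α = (∫ x in Ioi (0:ℝ), FbmAux.K α u x) / F1 := by
    intro u hu
    rw [FbmAux.K_int_eq hα0 u hu, ← hF1def, mul_div_assoc, div_self hF1pos.ne', mul_one]
  have habs : ∀ u : ℝ, |u| ^ α = (∫ x in Ioi (0:ℝ), FbmAux.K α u x) / F1 := by
    intro u
    rcases le_or_gt 0 u with h | h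
    · rw [abs_of_nonneg h]; exact hrep u h
    · rw [abs_of_neg h, hrep (-u) (by linarith), FbmAux.K_neg]
  have hterm : ∀ i j, fbmCov H (t i) (t j)
      = (∫ x in Ioi (0:ℝ), (FbmAux.K α (t i) x + FbmAux.K α (t j) x
          - FbmAux.K α (t j - t i) x)) / (2 * F1) := by
    intro i j
    have hadd : Integrable (fun x => FbmAux.K α (t i) x + FbmAux.K α (t j) x)
        (volume.restrict (Ioi 0)) := by exact (hKint (t i)).add (hKint (t j))
    rw [fbmCov, ← hα, hrep _ (ht i), hrep _ (ht j), habs (t j - t i),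
      integral_sub hadd (hKint _), integral_add (hKint (t i)) (hKint (t j)),
      ← add_div, div_sub_div_same, div_div, mul_comm F1 2]
  have hint2 : ∀ i j : Fin m, Integrable
      (fun x => c i * c j * (FbmAux.K α (t i) x + FbmAux.K α (t j) x
        - FbmAux.K α (t j - t i) x)) (volume.restrict (Ioi 0)) := by
    intro i j
    exact (((hKint (t i)).add (hKint (t j))).sub (hKint (t j - t i))).const_mul _
  have hintsum : ∀ i : Fin m, Integrable
      (fun x => ∑ j, c i * c j * (FbmAux.K α (t i) x + FbmAux.K α (t j) x
        - FbmAux.K α (t j - t i) x)) (volume.restrict (Ioi 0)) := by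
    intro i
    exact integrable_finset_sum _ (fun j _ => hint2 i j)
  have hsum : ∑ i, ∑ j, c i * c j * fbmCov H (t i) (t j)
      = (∫ x in Ioi (0:ℝ), ∑ i, ∑ j, c i * c j * (FbmAux.K α (t i) x + FbmAux.K α (t j) x
          - FbmAux.K α (t j - t i) x)) / (2 * F1) := by
    simp only [hterm]
    simp_rw [← mul_div_assoc, ← Finset.sum_div]
    congr 1
    rw [MeasureTheory.integral_finset_sum _ (fun i _ => hintsum i)]
    refine Finset.sum_congr rfl fun i _ => ?_
    rw [MeasureTheory.integral_finset_sum _ (fun j _ => hint2 i j)]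
    refine Finset.sum_congr rfl fun j _ => ?_
    rw [MeasureTheory.integral_const_mul]
  rw [hsum]
  apply div_nonneg _ (by linarith)
  apply setIntegral_nonneg measurableSet_Ioi
  intro x hx
  have hid : ∑ i, ∑ j, c i * c j * (FbmAux.K α (t i) x + FbmAux.K α (t j) x
        - FbmAux.K α (t j - t i) x)
      = ((∑ i, c i * (1 - Real.cos (t i * x))) ^ 2
        + (∑ i, c i * Real.sin (t i * x)) ^ 2) * x ^ (-1 - α) := by
    rw [sq, sq, Finset.sum_mul_sum, Finset.sum_mul_sum, ← Finset.sum_add_distrib,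
      Finset.sum_mul]
    refine Finset.sum_congr rfl fun i _ => ?_
    rw [← Finset.sum_add_distrib, Finset.sum_mul]
    refine Finset.sum_congr rfl fun j _ => ?_
    simp only [FbmAux.K]
    rw [show (t j - t i) * x = t j * x - t i * x from by ring, Real.cos_sub]
    ring
  rw [hid]
  have hw : (0:ℝ) ≤ x ^ (-1 - α) := Real.rpow_nonneg (le_of_lt hx) _
  positivity
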